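/- arXiv:math/0603391 — 4 statements merged into one kernel-verified Lean document; each statement's English description precedes it below -/
import Mathlib

section
/- Let (C₂, C₁, C₀) be a 2-crossed module of commutative algebras with associated quadratic module L →δ M →∂ N, where M = C₁/P₃, L = C₂/P₃′. Then ker∂/Im δ ≅ ker∂₁/Im ∂₂, i.e., the second homotopy modules of the 2-crossed module and its associated quadratic module are isomorphic. -/
/-- A 2-crossed module of commutative algebras: a complex
`C₂ →d2 C₁ →d1 C₀` of `C₀`-algebras in which `d2` is a crossed module
(for the action `actL` of `C₁` on `C₂`), together with a `C₀`-bilinear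
Peiffer lifting `lift : C₁ × C₁ → C₂` satisfying the axioms 2CM1–2CM5. -/
structure TwoCrossedModule (C₂ C₁ C₀ : Type*)
    [CommRing C₂] [CommRing C₁] [CommRing C₀] where
  d2 : C₂ →+* C₁
  d1 : C₁ →+* C₀
  d1_d2 : ∀ x, d1 (d2 x) = 0
  /-- action of `C₀` on `C₁` -/
  act1 : C₀ → C₁ → C₁
  /-- action of `C₀` on `C₂` -/
  act2 : C₀ → C₂ → C₂
  /-- action of `C₁` on `C₂` -/
  actL : C₁ → C₂ → C₂
  /-- the Peiffer lifting `{ − ⊗ − }` -/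
  lift : C₁ → C₁ → C₂
  act1_add : ∀ r c c', act1 r (c + c') = act1 r c + act1 r c'
  add_act1 : ∀ r r' c, act1 (r + r') c = act1 r c + act1 r' c
  act1_act1 : ∀ r r' c, act1 (r * r') c = act1 r (act1 r' c)
  act1_mul : ∀ r c c', act1 r (c * c') = act1 r c * c'
  d1_act1 : ∀ r c, d1 (act1 r c) = d1 c * r
  act2_add : ∀ r x x', act2 r (x + x') = act2 r x + act2 r x'
  add_act2 : ∀ r r' x, act2 (r + r') x = act2 r x + act2 r' x
  act2_act2 : ∀ r r' x, act2 (r * r') x = act2 r (act2 r' x)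
  act2_mul : ∀ r x x', act2 r (x * x') = act2 r x * x'
  actL_add : ∀ y x x', actL y (x + x') = actL y x + actL y x'
  add_actL : ∀ y y' x, actL (y + y') x = actL y x + actL y' x
  /-- `d2` is equivariant: `∂₂(x·y) = ∂₂(x) y` -/
  d2_actL : ∀ y x, d2 (actL y x) = d2 x * y
  /-- the Peiffer identity for the crossed module `d2` -/
  peiffer2 : ∀ x x', actL (d2 x) x' = x' * x
  /-- `C₁` acts on `C₂` via `C₀`: `(x·y)·z = x·(y·z)` -/
  actL_via : ∀ z y x, act2 z (actL y x) = actL (act1 z y) x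
  lift_add_left : ∀ y₀ y₀' y₁, lift (y₀ + y₀') y₁ = lift y₀ y₁ + lift y₀' y₁
  lift_add_right : ∀ y₀ y₁ y₁', lift y₀ (y₁ + y₁') = lift y₀ y₁ + lift y₀ y₁'
  /-- 2CM1 -/
  cm1 : ∀ y₀ y₁, d2 (lift y₀ y₁) = y₀ * y₁ - act1 (d1 y₁) y₀
  /-- 2CM2 -/
  cm2 : ∀ x₁ x₂, lift (d2 x₁) (d2 x₂) = x₁ * x₂
  /-- 2CM3 -/
  cm3 : ∀ y₀ y₁ y₂, lift y₀ (y₁ * y₂) = lift (y₀ * y₁) y₂ + act2 (d1 y₂) (lift y₀ y₁)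
  /-- 2CM4 a) -/
  cm4a : ∀ x y, lift (d2 x) y = actL y x - act2 (d1 y) x
  /-- 2CM4 b) -/
  cm4b : ∀ y x, lift y (d2 x) = actL y x
  /-- 2CM5 -/
  cm5a : ∀ y₀ y₁ z, act2 z (lift y₀ y₁) = lift (act1 z y₀) y₁
  cm5b : ∀ y₀ y₁ z, act2 z (lift y₀ y₁) = lift y₀ (act1 z y₁)

namespace TwoCrossedModule

variable {C₂ C₁ C₀ : Type*} [CommRing C₂] [CommRing C₁] [CommRing C₀]

/-- The Peiffer element `⟨x,y⟩ = xy − x·∂₁y` of the pre-crossed module `d1`. -/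
def pf (T : TwoCrossedModule C₂ C₁ C₀) (x y : C₁) : C₁ :=
  x * y - T.act1 (T.d1 y) x

/-- The ideal `P₃` of `C₁` generated by the triple Peiffer elements
`⟨⟨x,y⟩,z⟩` and `⟨x,⟨y,z⟩⟩`. -/
def P3 (T : TwoCrossedModule C₂ C₁ C₀) : Ideal C₁ :=
  Ideal.span {w : C₁ | ∃ x y z : C₁, w = T.pf (T.pf x y) z ∨ w = T.pf x (T.pf y z)}

/-- The ideal `P₃′` of `C₂` generated by the elements `{⟨x,y⟩ ⊗ z}` and
`{x ⊗ ⟨y,z⟩}`. -/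
def P3' (T : TwoCrossedModule C₂ C₁ C₀) : Ideal C₂ :=
  Ideal.span {w : C₂ | ∃ x y z : C₁, w = T.lift (T.pf x y) z ∨ w = T.lift x (T.pf y z)}

end TwoCrossedModule

section Aux
variable {C₂ C₁ C₀ : Type*} [CommRing C₂] [CommRing C₁] [CommRing C₀]
  (T : TwoCrossedModule C₂ C₁ C₀)

lemma TwoCrossedModule.d2_lift_eq_pf (x y : C₁) :
    T.d2 (T.lift x y) = T.pf x y := T.cm1 x y

/-- The image of `d2` is an ideal of `C₁` (via the action `actL`). -/
def TwoCrossedModule.imd2 : Ideal C₁ where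
  carrier := Set.range T.d2
  add_mem' := by rintro a b ⟨x, rfl⟩ ⟨y, rfl⟩; exact ⟨x + y, map_add _ _ _⟩
  zero_mem' := ⟨0, map_zero _⟩
  smul_mem' := by
    rintro r a ⟨x, rfl⟩
    exact ⟨T.actL r x, by rw [T.d2_actL, smul_eq_mul]; ring⟩

lemma TwoCrossedModule.P3_le_imd2 : T.P3 ≤ T.imd2 := by
  rw [TwoCrossedModule.P3, Ideal.span_le]
  rintro w ⟨x, y, z, (rfl | rfl)⟩
  · exact ⟨T.lift (T.pf x y) z, T.d2_lift_eq_pf _ _⟩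
  · exact ⟨T.lift x (T.pf y z), T.d2_lift_eq_pf _ _⟩

end Aux

/-- For a 2-crossed module of commutative algebras with associated quadratic
module `L = C₂/P₃′ →δ M = C₁/P₃ →∂ N = C₀`, the second homotopy modules
agree: `ker ∂ / Im δ ≅ ker ∂₁ / Im ∂₂`. -/
theorem pi2_iso {C₂ C₁ C₀ : Type*}
    [CommRing C₂] [CommRing C₁] [CommRing C₀]
    (T : TwoCrossedModule C₂ C₁ C₀)
    (h0 : ∀ w ∈ T.P3, T.d1 w = 0)
    (hle : T.P3' ≤ T.P3.comap T.d2) :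
    Nonempty
      ((↥((RingHom.ker (Ideal.Quotient.lift T.P3 T.d1 h0)).toAddSubgroup) ⧸
          (AddMonoidHom.range
            (Ideal.quotientMap T.P3 T.d2 hle).toAddMonoidHom).addSubgroupOf
            ((RingHom.ker (Ideal.Quotient.lift T.P3 T.d1 h0)).toAddSubgroup))
        ≃+
       (↥((RingHom.ker T.d1).toAddSubgroup) ⧸
          (AddMonoidHom.range T.d2.toAddMonoidHom).addSubgroupOf
            ((RingHom.ker T.d1).toAddSubgroup))) := by
  classical
  set K : AddSubgroup C₁ := (RingHom.ker T.d1).toAddSubgroup with hKdef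
  set dbar := Ideal.Quotient.lift T.P3 T.d1 h0 with hdbar
  set A : AddSubgroup (C₁ ⧸ T.P3) := (RingHom.ker dbar).toAddSubgroup with hAdef
  set B : AddSubgroup ↥A :=
    (AddMonoidHom.range (Ideal.quotientMap T.P3 T.d2 hle).toAddMonoidHom).addSubgroupOf A
    with hBdef
  set I : AddSubgroup ↥K :=
    (AddMonoidHom.range T.d2.toAddMonoidHom).addSubgroupOf K with hIdef
  have hmem : ∀ x : ↥K, Ideal.Quotient.mk T.P3 (x : C₁) ∈ A := by
    intro x
    have hx : T.d1 (x : C₁) = 0 := x.2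
    simp [hAdef, hdbar, RingHom.mem_ker, Ideal.Quotient.lift_mk, hx]
  let g : ↥K →+ ↥A :=
    AddMonoidHom.codRestrict
      ((Ideal.Quotient.mk T.P3).toAddMonoidHom.comp K.subtype) A hmem
  let f : ↥K →+ (↥A ⧸ B) := (QuotientAddGroup.mk' B).comp g
  have hs : Function.Surjective f := by
    intro q
    obtain ⟨a, rfl⟩ := QuotientAddGroup.mk_surjective q
    obtain ⟨x, hx⟩ := Ideal.Quotient.mk_surjective (a : C₁ ⧸ T.P3)
    have hxK : x ∈ K := by
      have ha : dbar (a : C₁ ⧸ T.P3) = 0 := a.2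
      have : dbar (Ideal.Quotient.mk T.P3 x) = T.d1 x := by
        simp [hdbar, Ideal.Quotient.lift_mk]
      rw [hx, ha] at this
      exact this.symm
    refine ⟨⟨x, hxK⟩, ?_⟩
    show QuotientAddGroup.mk _ = QuotientAddGroup.mk a
    congr 1
    exact Subtype.ext hx
  have hker : f.ker = I := by
    ext x
    simp only [AddMonoidHom.mem_ker]
    constructor
    · intro h
      have h' : (⟨Ideal.Quotient.mk T.P3 (x : C₁), hmem x⟩ : ↥A) ∈ B := by
        rwa [← QuotientAddGroup.eq_zero_iff]
      rw [hBdef, AddSubgroup.mem_addSubgroupOf] at h'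
      obtain ⟨c, hc⟩ := h'
      obtain ⟨z, rfl⟩ := Ideal.Quotient.mk_surjective c
      rw [RingHom.toAddMonoidHom_eq_coe, AddMonoidHom.coe_coe,
        Ideal.quotientMap_mk] at hc
      have hsub : T.d2 z - (x : C₁) ∈ T.P3 :=
        (Ideal.Quotient.mk_eq_mk_iff_sub_mem _ _).mp hc
      obtain ⟨w, hw⟩ := T.P3_le_imd2 hsub
      rw [hIdef, AddSubgroup.mem_addSubgroupOf]
      refine ⟨z - w, ?_⟩
      show T.d2 (z - w) = (x : C₁)
      rw [map_sub, hw]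
      ring
    · intro h
      rw [hIdef, AddSubgroup.mem_addSubgroupOf] at h
      obtain ⟨z, hz⟩ := h
      show QuotientAddGroup.mk _ = 0
      rw [QuotientAddGroup.eq_zero_iff, hBdef, AddSubgroup.mem_addSubgroupOf]
      refine ⟨Ideal.Quotient.mk T.P3' z, ?_⟩
      show Ideal.quotientMap T.P3 T.d2 hle (Ideal.Quotient.mk T.P3' z)
        = Ideal.Quotient.mk T.P3 (x : C₁)
      rw [Ideal.quotientMap_mk]
      exact congrArg _ hz
  have e1 : (↥K ⧸ f.ker) ≃+ (↥A ⧸ B) :=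
    QuotientAddGroup.quotientKerEquivOfSurjective f hs
  have e2 : (↥K ⧸ f.ker) ≃+ (↥K ⧸ I) :=
    QuotientAddGroup.quotientAddEquivOfEq hker
  exact ⟨(e1.symm.trans e2 : (↥A ⧸ B) ≃+ (↥K ⧸ I))⟩
end

section
/- Let E be a simplicial commutative algebra. For x ∈ NE₁ and y ∈ NE₂, the element C_{(2,1),(0)}(x⊗y) = s₂s₁x(s₀y − s₁y + s₂y) satisfies d₃(C_{(2,1),(0)}(x⊗y)) = s₁x(s₀d₂y − s₁d₂y + y), and this element lies in ker d₀ · (ker d₁ ∩ ker d₂). -/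
/-- The 3-truncation of a simplicial commutative algebra: algebras
`E₀, E₁, E₂, E₃` with face maps `dᵢ` and degeneracy maps `sᵢ` satisfying the
simplicial identities.  `d10, d11 : E₁ → E₀` are `d₀¹, d₁¹`; `s00 : E₀ → E₁`
is `s₀⁰`; `d20, d21, d22 : E₂ → E₁` are `d₀², d₁², d₂²`; `s10, s11 : E₁ → E₂`
are `s₀¹, s₁¹`; `d30, …, d33 : E₃ → E₂` are `d₀³, …, d₃³`; and
`s20, s21, s22 : E₂ → E₃` are `s₀², s₁², s₂²`. -/
structure SimpAlg3 (E₀ E₁ E₂ E₃ : Type*)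
    [CommRing E₀] [CommRing E₁] [CommRing E₂] [CommRing E₃] where
  d10 : E₁ →+* E₀
  d11 : E₁ →+* E₀
  s00 : E₀ →+* E₁
  d20 : E₂ →+* E₁
  d21 : E₂ →+* E₁
  d22 : E₂ →+* E₁
  s10 : E₁ →+* E₂
  s11 : E₁ →+* E₂
  d30 : E₃ →+* E₂
  d31 : E₃ →+* E₂
  d32 : E₃ →+* E₂
  d33 : E₃ →+* E₂
  s20 : E₂ →+* E₃
  s21 : E₂ →+* E₃
  s22 : E₂ →+* E₃
  -- simplicial identities dᵢdⱼ = dⱼ₋₁dᵢ (i < j)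
  dd_01 : ∀ x, d10 (d21 x) = d10 (d20 x)
  dd_02 : ∀ x, d10 (d22 x) = d11 (d20 x)
  dd_12 : ∀ x, d11 (d22 x) = d11 (d21 x)
  ddd_01 : ∀ x, d20 (d31 x) = d20 (d30 x)
  ddd_02 : ∀ x, d20 (d32 x) = d21 (d30 x)
  ddd_03 : ∀ x, d20 (d33 x) = d22 (d30 x)
  ddd_12 : ∀ x, d21 (d32 x) = d21 (d31 x)
  ddd_13 : ∀ x, d21 (d33 x) = d22 (d31 x)
  ddd_23 : ∀ x, d22 (d33 x) = d22 (d32 x)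
  -- simplicial identities dᵢsⱼ
  ds_00 : ∀ r, d10 (s00 r) = r
  ds_10 : ∀ r, d11 (s00 r) = r
  ds2_00 : ∀ x, d20 (s10 x) = x
  ds2_10 : ∀ x, d21 (s10 x) = x
  ds2_20 : ∀ x, d22 (s10 x) = s00 (d11 x)
  ds2_01 : ∀ x, d20 (s11 x) = s00 (d10 x)
  ds2_11 : ∀ x, d21 (s11 x) = x
  ds2_21 : ∀ x, d22 (s11 x) = x
  ds3_00 : ∀ x, d30 (s20 x) = x
  ds3_10 : ∀ x, d31 (s20 x) = x
  ds3_20 : ∀ x, d32 (s20 x) = s10 (d21 x)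
  ds3_30 : ∀ x, d33 (s20 x) = s10 (d22 x)
  ds3_01 : ∀ x, d30 (s21 x) = s10 (d20 x)
  ds3_11 : ∀ x, d31 (s21 x) = x
  ds3_21 : ∀ x, d32 (s21 x) = x
  ds3_31 : ∀ x, d33 (s21 x) = s11 (d22 x)
  ds3_02 : ∀ x, d30 (s22 x) = s11 (d20 x)
  ds3_12 : ∀ x, d31 (s22 x) = s11 (d21 x)
  ds3_22 : ∀ x, d32 (s22 x) = x
  ds3_32 : ∀ x, d33 (s22 x) = x
  -- simplicial identities sᵢsⱼ = sⱼ₊₁sᵢ (i ≤ j)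
  ss_00 : ∀ r, s10 (s00 r) = s11 (s00 r)
  sss_00 : ∀ x, s20 (s10 x) = s21 (s10 x)
  sss_01 : ∀ x, s20 (s11 x) = s22 (s10 x)
  sss_11 : ∀ x, s21 (s11 x) = s22 (s11 x)

namespace SimpAlg3

variable {E₀ E₁ E₂ E₃ : Type*}
  [CommRing E₀] [CommRing E₁] [CommRing E₂] [CommRing E₃]

/-- `NE₁ = ker d₀¹`, the degree-1 term of the Moore complex. -/
def NE1 (S : SimpAlg3 E₀ E₁ E₂ E₃) : Set E₁ := {x : E₁ | S.d10 x = 0}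

/-- The Peiffer bracket `⟨a,b⟩ = ab − a·∂₁b = ab − a·s₀d₁(b)` on `NE₁`,
for the pre-crossed module `∂₁ = d₁ : NE₁ → NE₀` with `NE₀ = E₀` acting via
`s₀` and multiplication. -/
def pf (S : SimpAlg3 E₀ E₁ E₂ E₃) (a b : E₁) : E₁ :=
  a * b - a * S.s00 (S.d11 b)

/-- The ideal `P₃(∂₁)` generated by the triple Peiffer elements
`⟨⟨x,y⟩,z⟩` and `⟨x,⟨y,z⟩⟩` for `x, y, z ∈ NE₁`. -/
def P3 (S : SimpAlg3 E₀ E₁ E₂ E₃) : Ideal E₁ :=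
  Ideal.span {w : E₁ | ∃ x ∈ S.NE1, ∃ y ∈ S.NE1, ∃ z ∈ S.NE1,
    w = S.pf (S.pf x y) z ∨ w = S.pf x (S.pf y z)}

/-- The representative `s₁x(s₁y − s₀y) ∈ E₂` of `ω′(x,y)`. -/
def omegaRep (S : SimpAlg3 E₀ E₁ E₂ E₃) (x y : E₁) : E₂ :=
  S.s11 x * (S.s11 y - S.s10 y)

/-- The ideal `∂₃(NE₃)` of `E₂` (as an ideal, the span of the image of
`NE₃ = ker d₀³ ∩ ker d₁³ ∩ ker d₂³` under `d₃³`). -/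
def bdry3 (S : SimpAlg3 E₀ E₁ E₂ E₃) : Ideal E₂ :=
  Ideal.span {w : E₂ | ∃ z : E₃, S.d30 z = 0 ∧ S.d31 z = 0 ∧ S.d32 z = 0 ∧ w = S.d33 z}

/-- The ideal of `E₂` whose image in `NE₂/∂₃(NE₃)` is `P₃′(∂₁)`: it is
generated by `∂₃(NE₃)` together with the elements `ω′(⟨x,y⟩,z)` and
`ω′(x,⟨y,z⟩)` for `x, y, z ∈ NE₁`. -/
def P3' (S : SimpAlg3 E₀ E₁ E₂ E₃) : Ideal E₂ :=
  S.bdry3 ⊔ Ideal.span {w : E₂ | ∃ x ∈ S.NE1, ∃ y ∈ S.NE1, ∃ z ∈ S.NE1,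
    w = S.omegaRep (S.pf x y) z ∨ w = S.omegaRep x (S.pf y z)}

end SimpAlg3

/-- For a simplicial commutative algebra, `x ∈ NE₁` and `y ∈ NE₂`:
`d₃(C₍₂,₁₎,₍₀₎(x⊗y)) = d₃(s₂s₁x(s₀y − s₁y + s₂y)) = s₁x(s₀d₂y − s₁d₂y + y)`,
and this element lies in `ker d₀ · (ker d₁ ∩ ker d₂)`. -/
theorem C210_formula {E₀ E₁ E₂ E₃ : Type*}
    [CommRing E₀] [CommRing E₁] [CommRing E₂] [CommRing E₃]
    (S : SimpAlg3 E₀ E₁ E₂ E₃)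
    (x : E₁) (hx : S.d10 x = 0)
    (y : E₂) (hy0 : S.d20 y = 0) (hy1 : S.d21 y = 0) :
    S.d33 (S.s22 (S.s11 x) * (S.s20 y - S.s21 y + S.s22 y)) =
      S.s11 x * (S.s10 (S.d22 y) - S.s11 (S.d22 y) + y) ∧
    S.s11 x * (S.s10 (S.d22 y) - S.s11 (S.d22 y) + y) ∈
      RingHom.ker S.d20 * (RingHom.ker S.d21 ⊓ RingHom.ker S.d22) := by
  constructor
  · rw [map_mul, map_add, map_sub, S.ds3_32, S.ds3_30, S.ds3_31, S.ds3_32]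
  · apply Ideal.mul_mem_mul
    · show S.d20 (S.s11 x) = 0
      rw [S.ds2_01, hx, map_zero]
    · constructor
      · show S.d21 _ = 0
        rw [map_add, map_sub, S.ds2_10, S.ds2_11, hy1, sub_self, zero_add]
      · show S.d22 _ = 0
        have : S.d11 (S.d22 y) = 0 := by rw [S.dd_12, hy1, map_zero]
        rw [map_add, map_sub, S.ds2_20, S.ds2_21, this, map_zero, zero_sub,
          neg_add_cancel]
end

section
/- Let E be a simplicial commutative algebra. For x, y ∈ NE₂ = ker d₀ ∩ ker d₁, d₃(C_{(2),(1)}(x⊗y)) = x(s₁d₂y − y), which lies in (ker d₀ ∩ ker d₁)(ker d₀ ∩ ker d₂), where C_{(2),(1)}(x⊗y) = s₂x(s₁y − s₂y). -/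
/-- For a simplicial commutative algebra and `x, y ∈ NE₂ = ker d₀ ∩ ker d₁`:
`d₃(C₍₂₎,₍₁₎(x⊗y)) = d₃(s₂x(s₁y − s₂y)) = x(s₁d₂y − y)`, and this element lies
in `(ker d₀ ∩ ker d₁)(ker d₀ ∩ ker d₂)`. -/
theorem C21_formula {E₀ E₁ E₂ E₃ : Type*}
    [CommRing E₀] [CommRing E₁] [CommRing E₂] [CommRing E₃]
    (S : SimpAlg3 E₀ E₁ E₂ E₃)
    (x y : E₂) (hx0 : S.d20 x = 0) (hx1 : S.d21 x = 0)
    (hy0 : S.d20 y = 0) (hy1 : S.d21 y = 0) :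
    S.d33 (S.s22 x * (S.s21 y - S.s22 y)) = x * (S.s11 (S.d22 y) - y) ∧
    x * (S.s11 (S.d22 y) - y) ∈
      (RingHom.ker S.d20 ⊓ RingHom.ker S.d21) *
        (RingHom.ker S.d20 ⊓ RingHom.ker S.d22) := by
  constructor
  · rw [map_mul, map_sub, S.ds3_32, S.ds3_31, S.ds3_32]
  · apply Ideal.mul_mem_mul
    · exact ⟨hx0, hx1⟩
    · constructor
      · show S.d20 _ = 0
        rw [map_sub, S.ds2_01, S.dd_02, hy0, map_zero, map_zero, sub_zero]
      · show S.d22 _ = 0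
        rw [map_sub, S.ds2_21, sub_self]
end

section
/- Let E be a simplicial commutative algebra with ω′ : NE₁ × NE₁ → NE₂/∂₃(NE₃) given by ω′(x,y) = s₁x(s₁y − s₀y) + ∂₃(NE₃) and ∂̄₂ induced by d₂. Then for all x,y,z ∈ NE₁: ∂̄₂ ω′(x, ⟨y,z⟩) = ⟨x, ⟨y,z⟩⟩ and ∂̄₂ ω′(⟨x,y⟩, z) = ⟨⟨x,y⟩, z⟩, where ⟨a,b⟩ = ab − a·s₀d₁b. Consequently ∂̄₂(P₃′(∂₁)) = P₃(∂₁). -/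
lemma d22_omegaRep {E₀ E₁ E₂ E₃ : Type*}
    [CommRing E₀] [CommRing E₁] [CommRing E₂] [CommRing E₃]
    (S : SimpAlg3 E₀ E₁ E₂ E₃) (a b : E₁) :
    S.d22 (S.omegaRep a b) = S.pf a b := by
  simp [SimpAlg3.omegaRep, SimpAlg3.pf, map_mul, map_sub, S.ds2_21, S.ds2_20,
    mul_sub]

/-- For a simplicial commutative algebra, with `ω′(x,y) = s₁x(s₁y − s₀y)` and
`∂̄₂` induced by `d₂`: for all `x, y, z ∈ NE₁`,
`∂̄₂ ω′(x,⟨y,z⟩) = ⟨x,⟨y,z⟩⟩` and `∂̄₂ ω′(⟨x,y⟩,z) = ⟨⟨x,y⟩,z⟩`;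
consequently `∂̄₂(P₃′(∂₁)) = P₃(∂₁)` (the `d₂`-image of the ideal generated
by the elements `ω′(⟨x,y⟩,z)`, `ω′(x,⟨y,z⟩)` is `P₃(∂₁)`). -/
theorem d2_omega_formulas {E₀ E₁ E₂ E₃ : Type*}
    [CommRing E₀] [CommRing E₁] [CommRing E₂] [CommRing E₃]
    (S : SimpAlg3 E₀ E₁ E₂ E₃) :
    (∀ x ∈ S.NE1, ∀ y ∈ S.NE1, ∀ z ∈ S.NE1,
      S.d22 (S.omegaRep x (S.pf y z)) = S.pf x (S.pf y z) ∧
      S.d22 (S.omegaRep (S.pf x y) z) = S.pf (S.pf x y) z) ∧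
    Ideal.map S.d22
      (Ideal.span {w : E₂ | ∃ x ∈ S.NE1, ∃ y ∈ S.NE1, ∃ z ∈ S.NE1,
        w = S.omegaRep (S.pf x y) z ∨ w = S.omegaRep x (S.pf y z)}) = S.P3 := by
  constructor
  · intro x _ y _ z _
    exact ⟨d22_omegaRep S x (S.pf y z), d22_omegaRep S (S.pf x y) z⟩
  · rw [Ideal.map_span, SimpAlg3.P3]
    congr 1
    ext w
    constructor
    · rintro ⟨v, ⟨x, hx, y, hy, z, hz, h | h⟩, rfl⟩
      · exact ⟨x, hx, y, hy, z, hz, Or.inl (by rw [h, d22_omegaRep])⟩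
      · exact ⟨x, hx, y, hy, z, hz, Or.inr (by rw [h, d22_omegaRep])⟩
    · rintro ⟨x, hx, y, hy, z, hz, h | h⟩
      · exact ⟨S.omegaRep (S.pf x y) z, ⟨x, hx, y, hy, z, hz, Or.inl rfl⟩,
          by rw [d22_omegaRep, h]⟩
      · exact ⟨S.omegaRep x (S.pf y z), ⟨x, hx, y, hy, z, hz, Or.inr rfl⟩,
          by rw [d22_omegaRep, h]⟩
end
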